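/- The group 𝒯 of tadpole matrices in M_{2p}(ℂ) is not finite modulo its centre, i.e., the quotient 𝒯/Z(𝒯) is infinite. -/

import Mathlib

open Matrix

/-- The `p × p` cyclic permutation matrix. -/
def cycleMatrix (p : ℕ) : Matrix (Fin p) (Fin p) ℂ :=
  Matrix.of fun i j => if (j : ℕ) = ((i : ℕ) + 1) % p then 1 else 0

/-- The fixed primitive `p²`-th root of unity `ξ = e^{2πi/p²}`. -/
noncomputable def xi (p : ℕ) : ℂ := Complex.exp (2 * Real.pi * Complex.I / (p ^ 2))

/-- The tadpole matrix with head `D C^k` (where `D = diagonal d`) and tail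
`diag(ξ^{0·k + a_0 p}, ξ^{1·k + a_1 p}, …, ξ^{(p-1)k + a_{p-1} p})`.
We index the `2p × 2p` matrix by `Fin p ⊕ Fin p`. -/
noncomputable def tadpole (p : ℕ) (d : Fin p → ℂ) (k : ℕ) (a : Fin p → ℕ) :
    Matrix (Fin p ⊕ Fin p) (Fin p ⊕ Fin p) ℂ :=
  Matrix.fromBlocks (Matrix.diagonal d * cycleMatrix p ^ k) 0 0
    (Matrix.diagonal fun j : Fin p => xi p ^ ((j : ℕ) * k + a j * p))

/-- Membership in the set `𝒯` of tadpole matrices: `D` is unitary diagonal of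
determinant one, `k ∈ {0, …, p-1}`, `a_j ∈ {0, …, p-1}` and `a_0 = 0` (so the first
tail entry is `1`). -/
def IsTadpole (p : ℕ) (A : Matrix (Fin p ⊕ Fin p) (Fin p ⊕ Fin p) ℂ) : Prop :=
  ∃ (d : Fin p → ℂ) (k : ℕ) (a : Fin p → ℕ),
    (∀ i, ‖d i‖ = 1) ∧ (∏ i, d i = 1) ∧ k < p ∧ (∀ j, a j < p) ∧
    (∀ j : Fin p, (j : ℕ) = 0 → a j = 0) ∧ A = tadpole p d k a

lemma cycle_pow_apply {p : ℕ} (hp : 0 < p) (k : ℕ) (i j : Fin p) :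
    (cycleMatrix p ^ k) i j = if (j : ℕ) = ((i : ℕ) + k) % p then 1 else 0 := by
  induction k generalizing j with
  | zero =>
    simp only [pow_zero, Matrix.one_apply, Nat.add_zero, Nat.mod_eq_of_lt i.isLt,
      Fin.ext_iff]
    exact if_congr (by exact eq_comm) rfl rfl
  | succ k ih =>
    rw [pow_succ, Matrix.mul_apply]
    set m0 : Fin p := ⟨((i : ℕ) + k) % p, Nat.mod_lt _ hp⟩ with hm0
    have key : ∀ m : Fin p, ((m : ℕ) = ((i : ℕ) + k) % p) = (m = m0) := by
      intro m; simp [hm0, Fin.ext_iff]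
    rw [Finset.sum_eq_single m0]
    · rw [ih m0, if_pos (show ((m0:ℕ) = ((i:ℕ)+k)%p) from rfl), one_mul]
      show (if (j : ℕ) = ((m0 : ℕ) + 1) % p then (1:ℂ) else 0) = _
      rw [hm0]
      simp only [Nat.mod_add_mod, Nat.add_assoc]
    · intro b _ hb
      rw [ih b, if_neg (fun h => hb (Fin.ext h)), zero_mul]
    · intro h; exact absurd (Finset.mem_univ m0) h

lemma head_apply {p : ℕ} (hp : 0 < p) (d : Fin p → ℂ) (k : ℕ) (i j : Fin p) :
    (Matrix.diagonal d * cycleMatrix p ^ k) i j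
      = if (j : ℕ) = ((i : ℕ) + k) % p then d i else 0 := by
  rw [Matrix.diagonal_mul, cycle_pow_apply hp, mul_ite, mul_one, mul_zero]

lemma tadpole_inl_inl {p : ℕ} (d : Fin p → ℂ) (k : ℕ) (a : Fin p → ℕ) (i j : Fin p) :
    tadpole p d k a (Sum.inl i) (Sum.inl j)
      = (Matrix.diagonal d * cycleMatrix p ^ k) i j := rfl

lemma tadpole_mul {p : ℕ} (d d' : Fin p → ℂ) (k k' : ℕ) (a a' : Fin p → ℕ) :
    tadpole p d k a * tadpole p d' k' a' =
      Matrix.fromBlocks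
        ((Matrix.diagonal d * cycleMatrix p ^ k) * (Matrix.diagonal d' * cycleMatrix p ^ k')) 0 0
        ((Matrix.diagonal fun j : Fin p => xi p ^ ((j : ℕ) * k + a j * p)) *
          (Matrix.diagonal fun j : Fin p => xi p ^ ((j : ℕ) * k' + a' j * p))) := by
  unfold tadpole
  rw [Matrix.fromBlocks_multiply]
  simp



lemma head_mul_head_apply {p : ℕ} (hp : 0 < p) (d d' : Fin p → ℂ) (k k' : ℕ) (i j : Fin p) :
    ((Matrix.diagonal d * cycleMatrix p ^ k) * (Matrix.diagonal d' * cycleMatrix p ^ k')) i j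
      = if (j : ℕ) = ((i : ℕ) + k + k') % p then
          d i * d' ⟨((i : ℕ) + k) % p, Nat.mod_lt _ hp⟩ else 0 := by
  rw [Matrix.mul_apply]
  set m0 : Fin p := ⟨((i : ℕ) + k) % p, Nat.mod_lt _ hp⟩ with hm0
  rw [Finset.sum_eq_single m0]
  · rw [head_apply hp, head_apply hp, if_pos (show ((m0 : ℕ) = ((i : ℕ) + k) % p) from rfl)]
    have hc : ((m0 : ℕ) + k') % p = ((i : ℕ) + k + k') % p := Nat.mod_add_mod _ _ _
    rw [hc, mul_ite, mul_zero]
  · intro b _ hb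
    rw [head_apply hp, if_neg (fun h => hb (Fin.ext h)), zero_mul]
  · intro h; exact absurd (Finset.mem_univ m0) h

noncomputable def zeta (p : ℕ) : ℂ := Complex.exp (2 * Real.pi * Complex.I / p)

lemma zeta_abs {p : ℕ} : ‖zeta p‖ = 1 := by
  rw [zeta, Complex.norm_exp]
  norm_num [Complex.div_re, Complex.mul_re, Complex.mul_im]

lemma zeta_pow_p {p : ℕ} (hp : 0 < p) : zeta p ^ p = 1 := by
  rw [zeta, ← Complex.exp_nat_mul]
  have : (p : ℂ) ≠ 0 := Nat.cast_ne_zero.mpr hp.ne'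
  rw [mul_div_cancel₀ _ this]
  simpa [mul_comm, mul_assoc] using Complex.exp_two_pi_mul_I

lemma zeta_pow_eq_one {p k : ℕ} (hk : k < p) (h : zeta p ^ k = 1) : k = 0 := by
  have hp : 0 < p := lt_of_le_of_lt (Nat.zero_le k) hk
  rw [zeta, ← Complex.exp_nat_mul, Complex.exp_eq_one_iff] at h
  obtain ⟨n, hn⟩ := h
  have hpc : (p : ℂ) ≠ 0 := Nat.cast_ne_zero.mpr (Nat.pos_of_ne_zero (by omega)).ne'
  have h2 : (2 * (Real.pi : ℂ) * Complex.I) ≠ 0 := by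
    simp [Real.pi_ne_zero, Complex.I_ne_zero, Complex.ofReal_ne_zero]
  have hk' : (k : ℂ) = n * p := by
    field_simp at hn
    linear_combination hn
  have : (k : ℤ) = n * p := by exact_mod_cast hk'
  have hpk : (p : ℤ) ∣ (k : ℤ) := ⟨n, by linarith⟩
  have hdvd : p ∣ k := Int.ofNat_dvd.mp (by exact_mod_cast hpk)
  exact Nat.eq_zero_of_dvd_of_lt hdvd hk



lemma zeta_prod {p : ℕ} (hodd : Odd p) : (∏ j : Fin p, zeta p ^ (j : ℕ)) = 1 := by
  obtain ⟨m, hm⟩ := hodd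
  have hp : 0 < p := by omega
  rw [Finset.prod_pow_eq_pow_sum]
  have hsum : (∑ j : Fin p, (j : ℕ)) = p * m := by
    have h1 : (∑ j : Fin p, (j : ℕ)) = ∑ i ∈ Finset.range p, i :=
      Fin.sum_univ_eq_sum_range (fun i => i) p
    have h2 := Finset.sum_range_id_mul_two p
    have h3 : (p * m) * 2 = p * (p - 1) := by
      have hpm : p - 1 = 2 * m := by omega
      rw [hpm, hm]; ring
    omega
  rw [hsum, pow_mul, zeta_pow_p hp, one_pow]

lemma w1_isTadpole {p : ℕ} (hp : p.Prime) (hodd : Odd p) :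
    IsTadpole p (tadpole p (fun j : Fin p => zeta p ^ (j : ℕ)) 0 (fun _ => 0)) := by
  refine ⟨_, 0, _, ?_, zeta_prod hodd, hp.pos, fun _ => hp.pos, fun _ _ => rfl, rfl⟩
  intro i; rw [norm_pow, zeta_abs, one_pow]

lemma w2_isTadpole {p : ℕ} (hp : p.Prime) :
    IsTadpole p (tadpole p (fun _ : Fin p => 1) 1 (fun _ => 0)) := by
  exact ⟨_, 1, _, fun i => by simp, by simp, hp.one_lt, fun _ => hp.pos, fun _ _ => rfl, rfl⟩

lemma central_structure {p : ℕ} (hp : p.Prime) (hodd : Odd p)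
    (e : Fin p → ℂ) (k : ℕ) (a : Fin p → ℕ)
    (habs : ∀ i, ‖e i‖ = 1) (hk : k < p)
    (hcomm : ∀ W, IsTadpole p W → tadpole p e k a * W = W * tadpole p e k a) :
    k = 0 ∧ ∀ i : Fin p, e i = e ⟨0, hp.pos⟩ := by
  have hp0 : 0 < p := hp.pos
  have hene : ∀ i, e i ≠ 0 := fun i h => by simpa [h] using habs i
  -- Step A: k = 0
  have hk0 : k = 0 := by
    have h := hcomm _ (w1_isTadpole hp hodd)
    rw [tadpole_mul, tadpole_mul] at h
    have h' := congrFun (congrFun h (Sum.inl ⟨0, hp0⟩)) (Sum.inl ⟨k, hk⟩)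
    rw [Matrix.fromBlocks_apply₁₁, Matrix.fromBlocks_apply₁₁,
      head_mul_head_apply hp0, head_mul_head_apply hp0] at h'
    simp only [Nat.add_zero, Nat.zero_add, Nat.mod_eq_of_lt hk] at h'
    rw [if_pos trivial, if_pos trivial] at h'
    have h'' : e ⟨0, hp0⟩ * zeta p ^ k = e ⟨0, hp0⟩ := by simpa using h'
    exact zeta_pow_eq_one hk (mul_left_cancel₀ (hene ⟨0, hp0⟩) (h''.trans (mul_one _).symm))
  subst hk0
  refine ⟨rfl, ?_⟩
  -- Step B: e constant
  have hstep : ∀ i : Fin p, e i = e ⟨((i : ℕ) + 1) % p, Nat.mod_lt _ hp0⟩ := by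
    intro i
    have h := hcomm _ (w2_isTadpole hp)
    rw [tadpole_mul, tadpole_mul] at h
    have h' := congrFun (congrFun h (Sum.inl i)) (Sum.inl ⟨((i : ℕ) + 1) % p, Nat.mod_lt _ hp0⟩)
    rw [Matrix.fromBlocks_apply₁₁, Matrix.fromBlocks_apply₁₁,
      head_mul_head_apply hp0, head_mul_head_apply hp0] at h'
    simp only [Nat.add_zero] at h'
    rw [if_pos trivial, if_pos trivial] at h'
    simpa using h'
  have key : ∀ m : ℕ, e ⟨m % p, Nat.mod_lt _ hp0⟩ = e ⟨0, hp0⟩ := by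
    intro m
    induction m with
    | zero => exact congrArg e (Fin.ext (Nat.zero_mod p))
    | succ m ih =>
      calc e ⟨(m + 1) % p, Nat.mod_lt _ hp0⟩
          = e ⟨(m % p + 1) % p, Nat.mod_lt _ hp0⟩ :=
            congrArg e (Fin.ext (Nat.mod_add_mod m p 1).symm)
        _ = e ⟨m % p, Nat.mod_lt _ hp0⟩ := (hstep ⟨m % p, Nat.mod_lt _ hp0⟩).symm
        _ = e ⟨0, hp0⟩ := ih
  intro i
  have := key (i : ℕ)
  rwa [Fin.ext_iff.mpr (show ((⟨(i:ℕ) % p, Nat.mod_lt _ hp0⟩ : Fin p) : ℕ) = (i : ℕ) from Nat.mod_eq_of_lt i.isLt) ] at this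

/-- The group `𝒯` of tadpole matrices is not finite modulo its centre: there is no
finite set `F` of tadpole matrices such that every tadpole matrix is of the form
`B * Z` with `B ∈ F` and `Z` in the centre of `𝒯` (i.e. `𝒯/Z(𝒯)` has infinitely
many cosets). -/
theorem tadpole_group_not_finite_mod_center (p : ℕ) (hp : p.Prime) (hodd : Odd p) :
    ¬ ∃ F : Finset (Matrix (Fin p ⊕ Fin p) (Fin p ⊕ Fin p) ℂ),
        (∀ B ∈ F, IsTadpole p B) ∧
        ∀ A, IsTadpole p A → ∃ B ∈ F, ∃ Z,
          IsTadpole p Z ∧ (∀ W, IsTadpole p W → Z * W = W * Z) ∧ A = B * Z := by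
  rintro ⟨F, hF, hcover⟩
  have hp0 : 0 < p := hp.pos
  have hp3 : 3 ≤ p := by
    obtain ⟨m, hm⟩ := hodd
    have := hp.two_le
    omega
  set i0 : Fin p := ⟨0, hp0⟩ with hi0
  set i1 : Fin p := ⟨1, by omega⟩ with hi1
  have hi01 : i0 ≠ i1 := by simp [hi0, hi1, Fin.ext_iff]
  -- the injective family on the unit circle
  set t : ℕ → ℂ := fun n => Complex.exp (Complex.ofReal ((1 : ℝ) / ((n : ℝ) + 1)) * Complex.I) with ht
  have ht_ne : ∀ n, t n ≠ 0 := fun n => Complex.exp_ne_zero _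
  have ht_abs : ∀ n, ‖t n‖ = 1 := by
    intro n; rw [ht]; simp [Complex.norm_exp]
  have ht_inj : Function.Injective t := by
    intro n m h
    have hre := congrArg Complex.re h
    rw [ht] at hre
    simp only [Complex.exp_ofReal_mul_I_re] at hre
    have hmem : ∀ n : ℕ, (1 : ℝ) / ((n : ℝ) + 1) ∈ Set.Icc (0 : ℝ) Real.pi := by
      intro n
      constructor
      · positivity
      · have h1 : (1 : ℝ) / ((n : ℝ) + 1) ≤ 1 := by
          rw [div_le_one (by positivity)]
          have : (0:ℝ) ≤ (n:ℝ) := Nat.cast_nonneg n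
          linarith
        linarith [Real.pi_gt_three]
    have heq := Real.injOn_cos (hmem n) (hmem m) hre
    rw [div_eq_div_iff (by positivity) (by positivity)] at heq
    have : (n : ℝ) = m := by linarith
    exact_mod_cast this
  -- the tadpole family
  set dfun : ℕ → Fin p → ℂ := fun n j =>
    if j = i0 then t n else if j = i1 then (t n)⁻¹ else 1 with hdfun
  have hd_abs : ∀ n j, ‖dfun n j‖ = 1 := by
    intro n j
    simp only [hdfun]
    by_cases h0 : j = i0
    · simp [h0, ht_abs]
    · by_cases h1 : j = i1
      · simp [h0, h1, Ne.symm hi01, map_inv₀, ht_abs]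
      · simp [h0, h1]
  have hd_prod : ∀ n, (∏ j, dfun n j) = 1 := by
    intro n
    have hsplit : ∀ j : Fin p, dfun n j =
        (if j = i0 then t n else 1) * (if j = i1 then (t n)⁻¹ else 1) := by
      intro j
      simp only [hdfun]
      by_cases h0 : j = i0
      · simp [h0, hi01]
      · simp [h0]
    rw [Finset.prod_congr rfl (fun j _ => hsplit j), Finset.prod_mul_distrib,
      Finset.prod_ite_eq', Finset.prod_ite_eq']
    simp [mul_inv_cancel₀ (ht_ne n)]
  have hA_tad : ∀ n, IsTadpole p (tadpole p (dfun n) 0 (fun _ => 0)) :=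
    fun n => ⟨dfun n, 0, fun _ => 0, hd_abs n, hd_prod n, hp0, fun _ => hp0,
      fun _ _ => rfl, rfl⟩
  have hA_entry : ∀ n, (tadpole p (dfun n) 0 (fun _ => 0)) (Sum.inl i0) (Sum.inl i0) = t n := by
    intro n
    rw [tadpole_inl_inl, head_apply hp0]
    rw [if_pos (by simp [hi0])]
    simp [hdfun]
  -- every t n lies in a fixed finite set
  set S : Finset ℂ :=
    ((F.image fun B => B (Sum.inl i0) (Sum.inl i0)) ×ˢ Polynomial.nthRootsFinset p (1 : ℂ)).image
      (fun q => q.1 * q.2) with hS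
  have hmemS : ∀ n, t n ∈ S := by
    intro n
    obtain ⟨B, hBF, Z, hZtad, hZcomm, hABZ⟩ := hcover _ (hA_tad n)
    obtain ⟨e, k, a, habs, hprodZ, hkZ, haZ, ha0Z, hZeq⟩ := hZtad
    subst hZeq
    have hcs := central_structure hp hodd e k a habs hkZ hZcomm
    obtain ⟨hk0, hconst⟩ := hcs
    subst hk0
    set lam : ℂ := e ⟨0, hp.pos⟩ with hlam
    have hlam_pow : lam ^ p = 1 := by
      have : (∏ i, e i) = lam ^ p := by
        rw [Finset.prod_congr rfl (fun i _ => hconst i), Finset.prod_const,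
          Finset.card_univ, Fintype.card_fin]
      rw [← this, hprodZ]
    -- column of Z at inl i0
    have hZcol : ∀ c, (tadpole p e 0 a) c (Sum.inl i0) = if c = Sum.inl i0 then lam else 0 := by
      rintro (m | m)
      · rw [tadpole_inl_inl, head_apply hp0]
        by_cases hmi : m = i0
        · subst hmi
          rw [if_pos (by simp [hi0]), if_pos rfl, hconst i0, hlam]
        · rw [if_neg, if_neg (by simpa using hmi)]
          intro hc
          exact hmi (Fin.ext (by simpa [hi0, Nat.mod_eq_of_lt m.isLt] using hc.symm))
      · show (0 : Matrix (Fin p) (Fin p) ℂ) m i0 = _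
        simp
    have hBZ_entry : (B * tadpole p e 0 a) (Sum.inl i0) (Sum.inl i0)
        = B (Sum.inl i0) (Sum.inl i0) * lam := by
      rw [Matrix.mul_apply]
      have : ∀ c, B (Sum.inl i0) c * (tadpole p e 0 a) c (Sum.inl i0)
          = if c = Sum.inl i0 then B (Sum.inl i0) (Sum.inl i0) * lam else 0 := by
        intro c
        rw [hZcol c]
        by_cases hc : c = Sum.inl i0
        · subst hc; simp
        · simp [hc]
      rw [Finset.sum_congr rfl (fun c _ => this c), Finset.sum_ite_eq']
      simp
    have hteq : t n = B (Sum.inl i0) (Sum.inl i0) * lam := by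
      rw [← hA_entry n, hABZ, hBZ_entry]
    rw [hS]
    apply Finset.mem_image.mpr
    refine ⟨(B (Sum.inl i0) (Sum.inl i0), lam), ?_, hteq.symm⟩
    rw [Finset.mem_product]
    exact ⟨Finset.mem_image.mpr ⟨B, hBF, rfl⟩, (Polynomial.mem_nthRootsFinset hp0 (1 : ℂ)).mpr hlam_pow⟩
  have hinf : (Set.range t).Infinite := Set.infinite_range_of_injective ht_inj
  exact hinf (Set.Finite.subset S.finite_toSet (by rintro x ⟨n, rfl⟩; exact hmemS n))
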